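/- Define g(x) = x for x ∈ [0,1], g(x) = √(2x−x²) for x ∈ (1,2], and g(x) = 0 otherwise, and let G(x) = ∑_{n∈ℤ}|g(x−2n)|² and N_G = {x : G(x) = 0}. Then for every δ > 0 there exists a set of positive Lebesgue measure contained in ℝ − N_G on which 0 < G(x) < δ; in particular, G is not essentially bounded below by any positive constant on ℝ − N_G, even though {E_m T_{2n} g}_{m,n∈ℤ} is a frame sequence. -/

import Mathlib

noncomputable section
open MeasureTheory Complex Filter Set
open scoped ENNReal NNReal ComplexConjugate

/-- The Weyl–Heisenberg system function `E_{mb} T_{na} g`,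
`x ↦ e^{2πi m b x} g (x - n a)`. -/
def whFun (g : ℝ → ℂ) (a b : ℝ) (m n : ℤ) : ℝ → ℂ := fun x =>
  Complex.exp (2 * Real.pi * Complex.I * ((m : ℂ) * (b : ℂ)) * (x : ℂ)) * g (x - (n : ℝ) * a)

/-- `G(x) = ∑ₙ |g(x - n a)|²`, as a sum in `[0, ∞]`. -/
def Gfun (g : ℝ → ℂ) (a : ℝ) (x : ℝ) : ℝ≥0∞ :=
  ∑' n : ℤ, (‖g (x - (n : ℝ) * a)‖₊ : ℝ≥0∞) ^ 2

/-- `v` is a frame for the set `V` with bounds `A, B`: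
`A‖f‖² ≤ ∑ᵢ |⟨f, vᵢ⟩|² ≤ B‖f‖²` for all `f ∈ V`. -/
def IsFrameWithFor {H : Type*} [NormedAddCommGroup H] [InnerProductSpace ℂ H]
    {ι : Type*} (v : ι → H) (A B : ℝ) (V : Set H) : Prop :=
  ∀ f ∈ V, A * ‖f‖ ^ 2 ≤ ∑' i, ‖(inner ℂ f (v i) : ℂ)‖ ^ 2 ∧
    ∑' i, ‖(inner ℂ f (v i) : ℂ)‖ ^ 2 ≤ B * ‖f‖ ^ 2

/-- `v` is a frame sequence with bounds `A, B`: it is a frame for the closure of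
the linear span of its range. -/
def IsFrameSeqWith {H : Type*} [NormedAddCommGroup H] [InnerProductSpace ℂ H]
    {ι : Type*} (v : ι → H) (A B : ℝ) : Prop :=
  IsFrameWithFor v A B (closure ((Submodule.span ℂ (Set.range v) : Submodule ℂ H) : Set H))

/-- The function `g` of the second Example: `g(x) = x` on `[0,1]`,
`g(x) = √(2x - x²)` on `(1,2]`, and `0` otherwise. -/
def gEx2 : ℝ → ℂ := fun x =>
  if 0 ≤ x ∧ x ≤ 1 then ((x : ℝ) : ℂ)
  else if 1 < x ∧ x ≤ 2 then ((Real.sqrt (2 * x - x ^ 2) : ℝ) : ℂ)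
  else 0

/-- **Example**. For `G(x) = ∑ₙ |gEx2(x - 2n)|²`, the function `G` takes arbitrarily
small positive values on sets of positive measure inside `ℝ - N_G` (so `G` is not
essentially bounded below by a positive constant there), even though
`{E_m T_{2n} gEx2}` is a frame sequence. -/
lemma gEx2_eq_zero {x : ℝ} (h : x ∉ Set.Ioc (0:ℝ) 2) : gEx2 x = 0 := by
  simp only [Set.mem_Ioc, not_and_or, not_lt, not_le] at h
  unfold gEx2
  split_ifs with h1 h2
  · rcases h with h | h
    · have : x = 0 := le_antisymm h h1.1
      simp [this]
    · exfalso; linarith [h1.2]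
  · exfalso; rcases h with h | h <;> linarith [h2.1, h2.2]
  · rfl

lemma gEx2_sq_on_left {y : ℝ} (h : y ∈ Set.Icc (0:ℝ) 1) :
    (starRingEnd ℂ) (gEx2 y) * gEx2 y = ((y ^ 2 : ℝ) : ℂ) := by
  rw [show gEx2 y = ((y:ℝ):ℂ) from if_pos ⟨h.1, h.2⟩]
  rw [Complex.conj_ofReal]
  push_cast
  ring

lemma gEx2_sq_on_right {y : ℝ} (h : y ∈ Set.Icc (1:ℝ) 2) :
    (starRingEnd ℂ) (gEx2 y) * gEx2 y = ((2 * y - y ^ 2 : ℝ) : ℂ) := by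
  rcases eq_or_lt_of_le h.1 with h1 | h1
  · rw [show gEx2 y = ((y:ℝ):ℂ) from if_pos ⟨by linarith [h.1], le_of_eq h1.symm⟩]
    rw [Complex.conj_ofReal, ← h1]
    push_cast; ring
  · rw [show gEx2 y = ((Real.sqrt (2*y - y^2) : ℝ) : ℂ) by
      unfold gEx2; rw [if_neg (by rintro ⟨-, hy⟩; linarith), if_pos ⟨h1, h.2⟩]]
    rw [Complex.conj_ofReal, ← Complex.ofReal_mul,
      Real.mul_self_sqrt (by nlinarith [h.2])]

lemma key_integral (k : ℤ) :
    (∫ y : ℝ, Complex.exp (2 * Real.pi * Complex.I * (k:ℂ) * (y:ℂ)) *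
      ((starRingEnd ℂ) (gEx2 y) * gEx2 y)) = if k = 0 then 1 else 0 := by
  set c : ℂ := 2 * Real.pi * Complex.I * (k:ℂ) with hc
  set h : ℝ → ℂ := fun y => Complex.exp (c * (y:ℂ)) * ((starRingEnd ℂ) (gEx2 y) * gEx2 y)
    with hh
  have hexpk : Complex.exp c = 1 := by
    rw [show c = (k:ℂ) * (2 * Real.pi * Complex.I) by rw [hc]; ring]
    exact Complex.exp_int_mul_two_pi_mul_I k
  have hcont1 : Continuous fun y : ℝ => Complex.exp (c * (y:ℂ)) * ((y^2 : ℝ):ℂ) := by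
    continuity
  have hcont2 : Continuous fun y : ℝ => Complex.exp (c * (y:ℂ)) * ((2*y - y^2 : ℝ):ℂ) := by
    continuity
  have hint1 : IntegrableOn h (Set.Ioc (0:ℝ) 1) volume := by
    apply (hcont1.intervalIntegrable 0 1).1.congr_fun _ measurableSet_Ioc
    intro y hy
    simp only [hh]
    rw [gEx2_sq_on_left (Set.Ioc_subset_Icc_self hy)]
  have hint2 : IntegrableOn h (Set.Ioc (1:ℝ) 2) volume := by
    apply (hcont2.intervalIntegrable 1 2).1.congr_fun _ measurableSet_Ioc
    intro y hy
    simp only [hh]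
    rw [gEx2_sq_on_right (Set.Ioc_subset_Icc_self hy)]
  have step1 : (∫ y : ℝ, h y) = ∫ y in Set.Ioc (0:ℝ) 2, h y := by
    refine (setIntegral_eq_integral_of_forall_compl_eq_zero fun y hy => ?_).symm
    simp [hh, gEx2_eq_zero hy]
  have step2 : (∫ y in Set.Ioc (0:ℝ) 2, h y)
      = (∫ y in Set.Ioc (0:ℝ) 1, h y) + ∫ y in Set.Ioc (1:ℝ) 2, h y := by
    rw [← Set.Ioc_union_Ioc_eq_Ioc (by norm_num : (0:ℝ) ≤ 1) (by norm_num : (1:ℝ) ≤ 2)]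
    exact setIntegral_union (Set.Ioc_disjoint_Ioc_of_le le_rfl) measurableSet_Ioc hint1 hint2
  have e1 : (∫ y in Set.Ioc (0:ℝ) 1, h y)
      = ∫ y in (0:ℝ)..1, Complex.exp (c * (y:ℂ)) * ((y^2 : ℝ):ℂ) := by
    rw [intervalIntegral.integral_of_le (by norm_num : (0:ℝ) ≤ 1)]
    refine setIntegral_congr_fun measurableSet_Ioc fun y hy => ?_
    simp only [hh]
    rw [gEx2_sq_on_left (Set.Ioc_subset_Icc_self hy)]
  have e2 : (∫ y in Set.Ioc (1:ℝ) 2, h y)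
      = ∫ y in (0:ℝ)..1, Complex.exp (c * (y:ℂ)) * ((1 - y^2 : ℝ):ℂ) := by
    have : (∫ y in Set.Ioc (1:ℝ) 2, h y)
        = ∫ y in (1:ℝ)..2, Complex.exp (c * (y:ℂ)) * ((2*y - y^2 : ℝ):ℂ) := by
      rw [intervalIntegral.integral_of_le (by norm_num : (1:ℝ) ≤ 2)]
      refine setIntegral_congr_fun measurableSet_Ioc fun y hy => ?_
      simp only [hh]
      rw [gEx2_sq_on_right (Set.Ioc_subset_Icc_self hy)]
    rw [this]
    have := intervalIntegral.integral_comp_add_right (a := (0:ℝ)) (b := 1)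
      (f := fun y : ℝ => Complex.exp (c * (y:ℂ)) * ((2*y - y^2 : ℝ):ℂ)) 1
    norm_num at this
    push_cast
    rw [← this]
    refine intervalIntegral.integral_congr fun y hy => ?_
    have heq : Complex.exp (c * ((y:ℂ) + 1)) = Complex.exp (c * (y:ℂ)) := by
      rw [mul_add, mul_one, Complex.exp_add, hexpk, mul_one]
    rw [heq]
    ring
  have combine : (∫ y : ℝ, h y) = ∫ y in (0:ℝ)..1, Complex.exp (c * (y:ℂ)) := by
    rw [step1, step2, e1, e2, ← intervalIntegral.integral_add
      (hcont1.intervalIntegrable 0 1)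
      ((Continuous.intervalIntegrable (by continuity) 0 1))]
    refine intervalIntegral.integral_congr fun y hy => ?_
    push_cast
    ring
  rw [show (∫ y : ℝ, Complex.exp (2 * Real.pi * Complex.I * (k:ℂ) * (y:ℂ)) *
      ((starRingEnd ℂ) (gEx2 y) * gEx2 y)) = ∫ y : ℝ, h y from rfl, combine]
  by_cases hk : k = 0
  · subst hk
    simp [hc]
  · rw [if_neg hk]
    have hcne : c ≠ 0 := by
      rw [hc]
      refine mul_ne_zero (mul_ne_zero (mul_ne_zero two_ne_zero ?_) Complex.I_ne_zero) ?_
      · exact_mod_cast Real.pi_ne_zero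
      · exact_mod_cast hk
    rw [integral_exp_mul_complex hcne]
    norm_num [hexpk]

lemma gEx2_mem_of_ne_zero {y : ℝ} (h : gEx2 y ≠ 0) : y ∈ Set.Ioc (0:ℝ) 2 := by
  by_contra hc
  exact h (gEx2_eq_zero hc)

lemma whFun_inner (p q : ℤ × ℤ) :
    (∫ x : ℝ, (starRingEnd ℂ) (whFun gEx2 2 1 p.1 p.2 x) * whFun gEx2 2 1 q.1 q.2 x)
      = if p = q then 1 else 0 := by
  obtain ⟨m, n⟩ := p
  obtain ⟨m', n'⟩ := q
  have expand : ∀ x : ℝ,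
      (starRingEnd ℂ) (whFun gEx2 2 1 m n x) * whFun gEx2 2 1 m' n' x
      = Complex.exp (2 * Real.pi * Complex.I * ((m' - m : ℤ):ℂ) * (x:ℂ)) *
        ((starRingEnd ℂ) (gEx2 (x - (n:ℝ)*2)) * gEx2 (x - (n':ℝ)*2)) := by
    intro x
    unfold whFun
    rw [map_mul]
    have hconj : (starRingEnd ℂ)
          (Complex.exp (2 * Real.pi * Complex.I * ((m:ℂ) * ((1:ℝ):ℂ)) * (x:ℂ)))
        = Complex.exp (-(2 * Real.pi * Complex.I * (m:ℂ) * (x:ℂ))) := by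
      rw [← Complex.exp_conj]
      congr 1
      simp only [map_mul, Complex.conj_ofReal, Complex.conj_I, map_ofNat, map_intCast]
      push_cast
      ring
    have hkey : Complex.exp (-(2 * Real.pi * Complex.I * (m:ℂ) * (x:ℂ))) *
          Complex.exp (2 * Real.pi * Complex.I * ((m':ℂ) * ((1:ℝ):ℂ)) * (x:ℂ))
        = Complex.exp (2 * Real.pi * Complex.I * ((m' - m : ℤ):ℂ) * (x:ℂ)) := by
      rw [← Complex.exp_add]
      congr 1
      push_cast
      ring
    rw [hconj, ← hkey]
    ring
  by_cases hn : n = n'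
  · subst hn
    set k : ℤ := m' - m with hk
    set Hf : ℝ → ℂ := fun y =>
      Complex.exp (2 * Real.pi * Complex.I * (k:ℂ) * ((y:ℂ) + (n:ℂ)*2)) *
        ((starRingEnd ℂ) (gEx2 y) * gEx2 y) with hHf
    have step : (∫ x : ℝ, (starRingEnd ℂ) (whFun gEx2 2 1 m n x) * whFun gEx2 2 1 m' n x)
        = ∫ x : ℝ, Hf (x - (n:ℝ)*2) := by
      congr 1
      funext x
      rw [expand x, hHf]
      simp only
      congr 1
      congr 1
      push_cast
      ring
    have hHf' : Hf = fun y : ℝ =>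
        Complex.exp (2 * Real.pi * Complex.I * (k:ℂ) * (y:ℂ)) *
          ((starRingEnd ℂ) (gEx2 y) * gEx2 y) := by
      funext y
      rw [hHf]
      simp only
      rw [mul_add (2 * (Real.pi:ℂ) * Complex.I * (k:ℂ)), Complex.exp_add,
        show (2 * (Real.pi:ℂ) * Complex.I * (k:ℂ)) * ((n:ℂ)*2)
          = ((2*k*n : ℤ):ℂ) * (2 * Real.pi * Complex.I) by push_cast; ring,
        Complex.exp_int_mul_two_pi_mul_I, mul_one]
    rw [step, MeasureTheory.integral_sub_right_eq_self Hf ((n:ℝ)*2), hHf', key_integral k]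
    by_cases hm : m = m'
    · subst hm
      simp [hk]
    · rw [if_neg (by omega), if_neg (by simp [hm])]
  · have hzero : ∀ x : ℝ,
        (starRingEnd ℂ) (whFun gEx2 2 1 m n x) * whFun gEx2 2 1 m' n' x = 0 := by
      intro x
      rw [expand x]
      rcases eq_or_ne (gEx2 (x - (n:ℝ)*2)) 0 with h1 | h1
      · simp [h1]
      rcases eq_or_ne (gEx2 (x - (n':ℝ)*2)) 0 with h2 | h2
      · simp [h2]
      exfalso
      have hm1 := gEx2_mem_of_ne_zero h1
      have hm2 := gEx2_mem_of_ne_zero h2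
      have : n = n' := by
        have a1 := hm1.1; have a2 := hm1.2; have b1 := hm2.1; have b2 := hm2.2
        have : ((n:ℝ)) = n' := by
          by_contra hne
          rcases lt_or_gt_of_ne hne with h | h
          · have : (n:ℝ) + 1 ≤ n' := by exact_mod_cast Int.add_one_le_iff.mpr (by exact_mod_cast h)
            linarith
          · have : (n':ℝ) + 1 ≤ n := by exact_mod_cast Int.add_one_le_iff.mpr (by exact_mod_cast h)
            linarith
        exact_mod_cast this
      exact hn this
    rw [if_neg (by simp [hn])]
    simp only [hzero]
    exact integral_zero ℝ ℂ

lemma part1 (δ : ℝ) (hδ : 0 < δ) : ∃ s : Set ℝ, MeasurableSet s ∧ 0 < volume s ∧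
    ∀ x ∈ s, 0 < (∑' n : ℤ, ‖gEx2 (x - (n : ℝ) * 2)‖ ^ 2) ∧
      (∑' n : ℤ, ‖gEx2 (x - (n : ℝ) * 2)‖ ^ 2) < δ := by
  set ε := min 1 (Real.sqrt δ) with hε
  have hε0 : 0 < ε := lt_min one_pos (Real.sqrt_pos.mpr hδ)
  refine ⟨Set.Ioo 0 ε, measurableSet_Ioo, by simp [hε0], ?_⟩
  rintro x ⟨hx0, hxε⟩
  have hx1 : x < 1 := lt_of_lt_of_le hxε (min_le_left _ _)
  have hsum : (∑' n : ℤ, ‖gEx2 (x - (n : ℝ) * 2)‖ ^ 2) = x ^ 2 := by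
    rw [tsum_eq_single (0 : ℤ)]
    · simp only [Int.cast_zero, zero_mul, sub_zero]
      rw [show gEx2 x = ((x:ℝ):ℂ) from if_pos ⟨hx0.le, hx1.le⟩]
      rw [Complex.norm_real, Real.norm_eq_abs, _root_.abs_of_nonneg hx0.le]
    · intro n hn
      have : gEx2 (x - (n : ℝ) * 2) = 0 := by
        apply gEx2_eq_zero
        rcases lt_or_gt_of_ne hn with h | h
        · have : (n : ℝ) ≤ -1 := by exact_mod_cast Int.le_of_lt_add_one (by simpa using h)
          intro hmem; have := hmem.2; nlinarith
        · have : (1 : ℝ) ≤ (n : ℝ) := by exact_mod_cast h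
          intro hmem; have := hmem.1; nlinarith
      simp [this]
  rw [hsum]
  constructor
  · positivity
  · have hxs : x < Real.sqrt δ := lt_of_lt_of_le hxε (min_le_right _ _)
    exact (Real.lt_sqrt hx0.le).mp hxs

theorem example_G_not_bounded_below
    (F : ℤ × ℤ → Lp ℂ 2 (volume : Measure ℝ))
    (hF : ∀ p : ℤ × ℤ, (F p : ℝ → ℂ) =ᵐ[volume] whFun gEx2 2 1 p.1 p.2) :
    (∀ δ : ℝ, 0 < δ → ∃ s : Set ℝ, MeasurableSet s ∧ 0 < volume s ∧
        ∀ x ∈ s, 0 < (∑' n : ℤ, ‖gEx2 (x - (n : ℝ) * 2)‖ ^ 2) ∧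
          (∑' n : ℤ, ‖gEx2 (x - (n : ℝ) * 2)‖ ^ 2) < δ) ∧
      ∃ A B : ℝ, 0 < A ∧ 0 < B ∧ IsFrameSeqWith F A B := by
  classical
  constructor
  · exact part1
  refine ⟨1, 1, one_pos, one_pos, ?_⟩
  have hinner : ∀ p q : ℤ × ℤ, (inner ℂ (F p) (F q) : ℂ) = if p = q then 1 else 0 := by
    intro p q
    rw [MeasureTheory.L2.inner_def]
    rw [integral_congr_ae (g := fun x : ℝ =>
        (starRingEnd ℂ) (whFun gEx2 2 1 p.1 p.2 x) * whFun gEx2 2 1 q.1 q.2 x) ?_]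
    · exact whFun_inner p q
    · filter_upwards [hF p, hF q] with x h1 h2
      rw [RCLike.inner_apply, h1, h2, mul_comm]
  have horth : Orthonormal ℂ F := orthonormal_iff_ite.mpr hinner
  set K := (Submodule.span ℂ (Set.range F)).topologicalClosure with hK
  have hmem : ∀ i, F i ∈ K := fun i =>
    Submodule.le_topologicalClosure _ (Submodule.subset_span (Set.mem_range_self i))
  set F' : ℤ × ℤ → K := Set.codRestrict F K hmem with hF'
  have horth' : Orthonormal ℂ F' := horth.codRestrict K hmem
  have himg2 : ((↑) : K → Lp ℂ 2 (volume : Measure ℝ)) ''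
        ((Submodule.span ℂ (Set.range F') : Submodule ℂ K) : Set K)
      = ((Submodule.span ℂ (Set.range F) : Submodule ℂ (Lp ℂ 2 (volume : Measure ℝ))) : Set _) := by
    have hmap := Submodule.map_span K.subtype (Set.range F')
    have : K.subtype '' (Set.range F') = Set.range F := by
      rw [← Set.range_comp]
      rfl
    rw [this] at hmap
    rw [← hmap, Submodule.map_coe]
    rfl
  have hsp : ⊤ ≤ (Submodule.span ℂ (Set.range F')).topologicalClosure := by
    intro x _
    have hx : (x : Lp ℂ 2 (volume : Measure ℝ)) ∈
        closure ((Submodule.span ℂ (Set.range F) : Submodule ℂ _) : Set _) := by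
      have hx2 : (x : Lp ℂ 2 (volume : Measure ℝ)) ∈ (K : Set _) := x.2
      rw [← Submodule.topologicalClosure_coe]
      exact hx2
    rw [← SetLike.mem_coe, Submodule.topologicalClosure_coe, closure_subtype, himg2]
    exact hx
  let b : HilbertBasis (ℤ × ℤ) ℂ K := HilbertBasis.mk horth' hsp
  have hb : ⇑b = F' := HilbertBasis.coe_mk _ _
  intro f hf
  have hfK : f ∈ K := by
    rw [← SetLike.mem_coe, Submodule.topologicalClosure_coe]
    exact hf
  set x : K := ⟨f, hfK⟩ with hx
  have hsum := b.hasSum_inner_mul_inner x x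
  have heq : (fun i => (inner ℂ x (b i) : ℂ) * inner ℂ (b i) x)
      = fun i => ((‖(inner ℂ f (F i) : ℂ)‖ ^ 2 : ℝ) : ℂ) := by
    funext i
    rw [hb]
    have h1 : (inner ℂ x (F' i) : ℂ) = inner ℂ f (F i) := rfl
    have h2 : (inner ℂ (F' i) x : ℂ) = (starRingEnd ℂ) (inner ℂ x (F' i) : ℂ) :=
      (inner_conj_symm (F' i) x).symm
    rw [h1, h2, h1, Complex.mul_conj]
    rw [Complex.normSq_eq_norm_sq]
  have hxx : (inner ℂ x x : ℂ) = ((‖f‖ ^ 2 : ℝ) : ℂ) := by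
    rw [show (inner ℂ x x : ℂ) = ((‖x‖ : ℝ) : ℂ) ^ 2 from inner_self_eq_norm_sq_to_K (𝕜 := ℂ) x]
    have : ‖x‖ = ‖f‖ := rfl
    rw [this]
    norm_cast
  rw [heq, hxx] at hsum
  have hreal : HasSum (fun i => ‖(inner ℂ f (F i) : ℂ)‖ ^ 2) (‖f‖ ^ 2) :=
    Complex.hasSum_ofReal.mp hsum
  rw [hreal.tsum_eq, one_mul]
  exact ⟨le_refl _, le_refl _⟩
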